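/- arXiv:1906.08715 — 2 statements merged into one kernel-verified Lean document; each statement's English description precedes it below -/
import Mathlib

section
/- Let a, b be orthonormal vectors in ℂ², ε > 0, and W = a a* + ε² b b*. Set f = W^{1/2} b and g = W^{-1/2} a. Then ‖W⁻¹ W^{1/2} f‖ · ‖W W^{-1/2} g‖ = 1, while ‖f‖ = ε and ‖g‖ = 1. In particular there is no constant C (independent of W) such that ‖W⁻¹ W^{1/2} f‖ · ‖W W^{-1/2} g‖ ≤ C ‖f‖ ‖g‖ holds for all positive definite W and all f, g. -/
open Matrix
open scoped ComplexOrder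

/-- The square root of a positive semidefinite matrix, as defined in Mathlib of December 2024
(removed since; restored here with its old definition). -/
noncomputable def Matrix.PosSemidef.sqrt {n 𝕜 : Type*} [Fintype n] [DecidableEq n] [RCLike 𝕜]
    {A : Matrix n n 𝕜} (hA : A.PosSemidef) : Matrix n n 𝕜 :=
  hA.1.eigenvectorUnitary.1 * diagonal ((↑) ∘ (Real.sqrt ∘ hA.1.eigenvalues)) *
    (star hA.1.eigenvectorUnitary : Matrix n n 𝕜)

/-- Euclidean norm of a vector in `ℂ^d`. -/
noncomputable def euclNorm {d : ℕ} (v : Fin d → ℂ) : ℝ :=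
  ‖(EuclideanSpace.equiv (Fin d) ℂ).symm v‖

lemma euclNorm_sq {d : ℕ} (v : Fin d → ℂ) :
    euclNorm v = Real.sqrt (Complex.re (star v ⬝ᵥ v)) := by
  rw [euclNorm, EuclideanSpace.norm_eq]
  congr 1
  simp only [dotProduct, Pi.star_apply, Complex.re_sum]
  refine Finset.sum_congr rfl fun i _ => ?_
  have : (EuclideanSpace.equiv (Fin d) ℂ).symm v i = v i := rfl
  rw [this, Complex.star_def, ← Complex.normSq_eq_conj_mul_self,
    Complex.sq_norm, Complex.normSq_eq_norm_sq]
  simp [Complex.sq_norm]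

lemma euclNorm_of_dot {d : ℕ} (v : Fin d → ℂ) (r : ℝ) (h : star v ⬝ᵥ v = (r:ℂ)) :
    euclNorm v = Real.sqrt r := by
  rw [euclNorm_sq, h, Complex.ofReal_re]

lemma mulVec_vecMulVec (u v x : Fin 2 → ℂ) :
    (vecMulVec u v).mulVec x = (v ⬝ᵥ x) • u := by
  ext i
  simp only [mulVec, vecMulVec_apply, dotProduct, Pi.smul_apply, smul_eq_mul,
    Finset.sum_mul]
  exact Finset.sum_congr rfl fun j _ => by ring

lemma vecMulVec_mul_vecMulVec (u v x y : Fin 2 → ℂ) :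
    vecMulVec u v * vecMulVec x y = (v ⬝ᵥ x) • vecMulVec u y := by
  ext i j
  simp only [mul_apply, vecMulVec_apply, Matrix.smul_apply, dotProduct, Finset.sum_mul, smul_eq_mul]
  exact Finset.sum_congr rfl fun k _ => by ring

section Key

variable {a b : Fin 2 → ℂ}

lemma hermit (a : Fin 2 → ℂ) : (vecMulVec a (star a))ᴴ = vecMulVec a (star a) := by
  ext i j
  simp [conjTranspose_apply, vecMulVec_apply, mul_comm]

lemma form_A (a x : Fin 2 → ℂ) :
    star x ⬝ᵥ (vecMulVec a (star a)).mulVec x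
      = (star a ⬝ᵥ x) * star (star a ⬝ᵥ x) := by
  rw [mulVec_vecMulVec, dotProduct_smul, smul_eq_mul]
  congr 1
  rw [star_dotProduct]

lemma sum_one (ha : star a ⬝ᵥ a = 1) (hb : star b ⬝ᵥ b = 1) (hab : star a ⬝ᵥ b = 0) :
    vecMulVec a (star a) + vecMulVec b (star b) = 1 := by
  have hba : star b ⬝ᵥ a = 0 := by rw [star_dotProduct, hab, star_zero]
  set M : Matrix (Fin 2) (Fin 2) ℂ := Matrix.of ![star a, star b] with hM
  have hMM : M * Mᴴ = 1 := by
    ext i j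
    fin_cases i <;> fin_cases j <;>
      simp [hM, mul_apply, Fin.sum_univ_two, Matrix.one_apply, conjTranspose_apply] <;>
      first
        | simpa [dotProduct, Fin.sum_univ_two] using ha
        | simpa [dotProduct, Fin.sum_univ_two] using hb
        | simpa [dotProduct, Fin.sum_univ_two] using hab
        | simpa [dotProduct, Fin.sum_univ_two] using hba
  have hMM' : Mᴴ * M = 1 := mul_eq_one_comm.mp hMM
  calc vecMulVec a (star a) + vecMulVec b (star b) = Mᴴ * M := by
        ext i j
        simp [hM, mul_apply, Fin.sum_univ_two, conjTranspose_apply, vecMulVec_apply,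
          mul_comm]
    _ = 1 := hMM'

end Key

section Key2

variable {a b : Fin 2 → ℂ}

lemma psd_S (t : ℝ) (ht : 0 ≤ t) :
    (vecMulVec a (star a) + (t : ℂ) • vecMulVec b (star b)).PosSemidef := by
  refine .of_dotProduct_mulVec_nonneg ?_ ?_
  · show _ᴴ = _
    rw [conjTranspose_add, conjTranspose_smul, hermit, hermit]
    congr 1
    simp [Complex.star_def, Complex.conj_ofReal]
  · intro x
    rw [add_mulVec, dotProduct_add, smul_mulVec, dotProduct_smul, smul_eq_mul,
      form_A, form_A]
    exact add_nonneg (mul_star_self_nonneg _)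
      (mul_nonneg (by exact_mod_cast Complex.zero_le_real.mpr ht) (mul_star_self_nonneg _))

lemma sq_S (ha : star a ⬝ᵥ a = 1) (hb : star b ⬝ᵥ b = 1) (hab : star a ⬝ᵥ b = 0)
    (t : ℂ) :
    (vecMulVec a (star a) + t • vecMulVec b (star b)) ^ 2
      = vecMulVec a (star a) + (t ^ 2) • vecMulVec b (star b) := by
  have hba : star b ⬝ᵥ a = 0 := by rw [star_dotProduct, hab, star_zero]
  rw [pow_two, add_mul, mul_add, mul_add, Matrix.mul_smul, Matrix.smul_mul,
    Matrix.smul_mul, Matrix.mul_smul, vecMulVec_mul_vecMulVec, vecMulVec_mul_vecMulVec,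
    vecMulVec_mul_vecMulVec, vecMulVec_mul_vecMulVec, ha, hb, hab, hba]
  simp [smul_smul, pow_two]

open scoped MatrixOrder in
lemma psdSqrt_eq_cfc {A : Matrix (Fin 2) (Fin 2) ℂ} (hA : A.PosSemidef) :
    hA.sqrt = CFC.sqrt A := by
  rw [CFC.sqrt_eq_cfc, cfc_nnreal_eq_real _ A, hA.1.cfc_eq, IsHermitian.cfc, Unitary.conjStarAlgAut_apply,
    Matrix.PosSemidef.sqrt]
  congr 3
  ext i
  simp [Real.coe_toNNReal', hA.eigenvalues_nonneg i]

open scoped MatrixOrder in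
lemma sqrt_id (ha : star a ⬝ᵥ a = 1) (hb : star b ⬝ᵥ b = 1) (hab : star a ⬝ᵥ b = 0)
    (t : ℝ) (ht : 0 ≤ t) (V : Matrix (Fin 2) (Fin 2) ℂ)
    (hV : V = vecMulVec a (star a) + ((t : ℂ) ^ 2) • vecMulVec b (star b))
    (hP : V.PosSemidef) :
    hP.sqrt = vecMulVec a (star a) + (t : ℂ) • vecMulVec b (star b) :=
  by
  rw [psdSqrt_eq_cfc]
  exact CFC.sqrt_unique (by rw [← sq, sq_S ha hb hab, hV]) (psd_S (a := a) (b := b) t ht).nonneg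

lemma posdefV (ha : star a ⬝ᵥ a = 1) (hb : star b ⬝ᵥ b = 1) (hab : star a ⬝ᵥ b = 0)
    (t : ℝ) (ht : 0 < t) :
    (vecMulVec a (star a) + (t : ℂ) • vecMulVec b (star b)).PosDef := by
  refine Matrix.PosDef.of_dotProduct_mulVec_pos (psd_S (a := a) (b := b) t ht.le).1 fun x hx => ?_
  have hform : star x ⬝ᵥ (vecMulVec a (star a) + (t : ℂ) • vecMulVec b (star b)).mulVec x
      = (star a ⬝ᵥ x) * star (star a ⬝ᵥ x)
        + (t : ℂ) * ((star b ⬝ᵥ x) * star (star b ⬝ᵥ x)) := by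
    rw [add_mulVec, dotProduct_add, smul_mulVec, dotProduct_smul, smul_eq_mul,
      form_A, form_A]
  set c := (star a ⬝ᵥ x) * star (star a ⬝ᵥ x) with hc
  set d := (star b ⬝ᵥ x) * star (star b ⬝ᵥ x) with hd
  have hc0 : 0 ≤ c := mul_star_self_nonneg _
  have hd0 : 0 ≤ d := mul_star_self_nonneg _
  have htC : (0:ℂ) < (t : ℂ) := by exact_mod_cast Complex.zero_lt_real.mpr ht
  have hxx : star x ⬝ᵥ x = c + d := by
    have h1 : star x ⬝ᵥ (1 : Matrix (Fin 2) (Fin 2) ℂ).mulVec x = c + d := by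
      rw [← sum_one ha hb hab, add_mulVec, dotProduct_add, form_A, form_A]
    rwa [one_mulVec] at h1
  have hpos : (0:ℂ) < c + d := by
    rw [← hxx]; exact (Matrix.dotProduct_star_self_pos_iff).mpr hx
  rw [hform]
  refine lt_of_le_of_ne (add_nonneg hc0 (mul_nonneg htC.le hd0)) fun h0 => ?_
  have hc' : c = 0 := le_antisymm (by
    calc c ≤ c + (t:ℂ) * d := le_add_of_nonneg_right (mul_nonneg htC.le hd0)
    _ = 0 := h0.symm) hc0
  have htd : (t:ℂ) * d = 0 := by rw [hc', zero_add] at h0; exact h0.symm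
  have hd' : d = 0 := by
    rcases mul_eq_zero.mp htd with h | h
    · exact absurd h htC.ne'
    · exact h
  rw [hc', hd', add_zero] at hpos
  exact lt_irrefl _ hpos

end Key2

lemma key (a b : Fin 2 → ℂ) (δ : ℝ) (hδ : 0 < δ)
    (ha : star a ⬝ᵥ a = 1) (hb : star b ⬝ᵥ b = 1) (hab : star a ⬝ᵥ b = 0)
    (V : Matrix (Fin 2) (Fin 2) ℂ)
    (hV : V = vecMulVec a (star a) + ((δ : ℂ) ^ 2) • vecMulVec b (star b))
    (hVpd : V.PosDef) (f g : Fin 2 → ℂ)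
    (hf : f = hVpd.posSemidef.sqrt.mulVec b)
    (hg : g = hVpd.inv.posSemidef.sqrt.mulVec a) :
    euclNorm (V⁻¹.mulVec (hVpd.posSemidef.sqrt.mulVec f)) *
        euclNorm (V.mulVec (hVpd.inv.posSemidef.sqrt.mulVec g)) = 1 ∧
    euclNorm f = δ ∧ euclNorm g = 1 := by
  have hba : star b ⬝ᵥ a = 0 := by rw [star_dotProduct, hab, star_zero]
  set A := vecMulVec a (star a) with hA
  set B := vecMulVec b (star b) with hB
  have hδC : ((δ:ℂ)) ≠ 0 := by exact_mod_cast Complex.ofReal_ne_zero.mpr hδ.ne'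
  -- mulVec facts
  have hAa : A.mulVec a = a := by rw [hA, mulVec_vecMulVec, ha, one_smul]
  have hAb : A.mulVec b = 0 := by rw [hA, mulVec_vecMulVec, hab, zero_smul]
  have hBb : B.mulVec b = b := by rw [hB, mulVec_vecMulVec, hb, one_smul]
  have hBa : B.mulVec a = 0 := by rw [hB, mulVec_vecMulVec, hba, zero_smul]
  -- sqrt of V
  have hsq : hVpd.posSemidef.sqrt = A + (δ:ℂ) • B :=
    sqrt_id ha hb hab δ hδ.le V hV hVpd.posSemidef
  -- inverse of V
  have hVinv : V⁻¹ = A + (((δ:ℂ)^2)⁻¹) • B := by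
    refine inv_eq_right_inv ?_
    rw [hV, add_mul, mul_add, mul_add, Matrix.mul_smul, Matrix.smul_mul,
      Matrix.smul_mul, Matrix.mul_smul, hA, hB, _root_.vecMulVec_mul_vecMulVec,
      _root_.vecMulVec_mul_vecMulVec, _root_.vecMulVec_mul_vecMulVec, _root_.vecMulVec_mul_vecMulVec,
      ha, hb, hab, hba]
    simp only [one_smul, zero_smul, smul_zero, add_zero, zero_add, smul_smul]
    rw [mul_inv_cancel₀ (pow_ne_zero 2 hδC), one_smul]
    exact sum_one ha hb hab
  -- sqrt of V⁻¹
  have hsqinv : hVpd.inv.posSemidef.sqrt = A + ((δ⁻¹ : ℝ) : ℂ) • B := by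
    refine sqrt_id ha hb hab δ⁻¹ (inv_nonneg.mpr hδ.le) V⁻¹ ?_ hVpd.inv.posSemidef
    rw [hVinv]
    congr 1
    push_cast
    rw [inv_pow]
  -- f and g
  have hf' : f = (δ:ℂ) • b := by
    rw [hf, hsq, add_mulVec, smul_mulVec, hAb, hBb, zero_add]
  have hg' : g = a := by
    rw [hg, hsqinv, add_mulVec, smul_mulVec, hAa, hBa, smul_zero, add_zero]
  -- the two vectors
  have hv1 : V⁻¹.mulVec (hVpd.posSemidef.sqrt.mulVec f) = b := by
    rw [hf', hsq, mulVec_smul, add_mulVec, smul_mulVec, hAb, hBb, zero_add,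
      smul_smul, mulVec_smul, hVinv, add_mulVec, smul_mulVec, hAb, hBb, zero_add,
      smul_smul]
    rw [show (δ:ℂ) * (δ:ℂ) * (((δ:ℂ)^2)⁻¹) = 1 by
      field_simp]
    rw [one_smul]
  have hv2 : V.mulVec (hVpd.inv.posSemidef.sqrt.mulVec g) = a := by
    rw [hg', hsqinv, add_mulVec, smul_mulVec, hAa, hBa, smul_zero, add_zero,
      hV, add_mulVec, smul_mulVec, hAa, hBa, smul_zero, add_zero]
  -- norms
  have hna : euclNorm a = 1 := by
    rw [euclNorm_of_dot a 1 (by exact_mod_cast ha), Real.sqrt_one]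
  have hnb : euclNorm b = 1 := by
    rw [euclNorm_of_dot b 1 (by exact_mod_cast hb), Real.sqrt_one]
  have hnf : euclNorm ((δ:ℂ) • b) = δ := by
    rw [euclNorm_of_dot _ (δ^2) ?_, Real.sqrt_sq hδ.le]
    have : star ((δ:ℂ) • b) = (δ:ℂ) • star b := by
      ext i; simp [Complex.star_def, Complex.conj_ofReal]
    rw [this, smul_dotProduct, dotProduct_smul, hb, smul_eq_mul, smul_eq_mul]
    push_cast
    ring
  refine ⟨?_, ?_, ?_⟩
  · rw [hv1, hv2, hnb, hna, one_mul]
  · rw [hf', hnf]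
  · rw [hg', hna]


/-- with `W = a a* + ε² b b*`, `f = W^{1/2} b`, `g = W^{-1/2} a`, one has
`‖W⁻¹ W^{1/2} f‖ ‖W W^{-1/2} g‖ = 1`, `‖f‖ = ε`, `‖g‖ = 1`; hence no constant `C`
independent of the weight gives the bilinear norm bound. -/
theorem bilinear_embedding_norm_failure
    (a b : Fin 2 → ℂ) (ε : ℝ) (hε : 0 < ε)
    (ha : star a ⬝ᵥ a = 1) (hb : star b ⬝ᵥ b = 1) (hab : star a ⬝ᵥ b = 0)
    (W : Matrix (Fin 2) (Fin 2) ℂ)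
    (hW : W = vecMulVec a (star a) + ((ε : ℂ) ^ 2) • vecMulVec b (star b))
    (hWpd : W.PosDef)
    (f g : Fin 2 → ℂ)
    (hf : f = hWpd.posSemidef.sqrt.mulVec b)
    (hg : g = hWpd.inv.posSemidef.sqrt.mulVec a) :
    euclNorm (W⁻¹.mulVec (hWpd.posSemidef.sqrt.mulVec f)) *
        euclNorm (W.mulVec (hWpd.inv.posSemidef.sqrt.mulVec g)) = 1 ∧
    euclNorm f = ε ∧ euclNorm g = 1 ∧
    ¬ ∃ C : ℝ, ∀ (V : Matrix (Fin 2) (Fin 2) ℂ) (hV : V.PosDef) (u v : Fin 2 → ℂ),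
        euclNorm (V⁻¹.mulVec (hV.posSemidef.sqrt.mulVec u)) *
            euclNorm (V.mulVec (hV.inv.posSemidef.sqrt.mulVec v)) ≤
          C * (euclNorm u * euclNorm v) := by
  obtain ⟨h1, h2, h3⟩ := key a b ε hε ha hb hab W hW hWpd f g hf hg
  refine ⟨h1, h2, h3, ?_⟩
  rintro ⟨C, hC⟩
  set δ : ℝ := 1 / (|C| + 1) with hδdef
  have hδ : 0 < δ := by positivity
  have hCδ : C * δ < 1 := by
    have h1' : C * δ ≤ |C| * δ := mul_le_mul_of_nonneg_right (le_abs_self C) hδ.le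
    have h2' : |C| * δ < 1 := by
      rw [hδdef]
      rw [mul_one_div, div_lt_one (by positivity)]
      linarith
    linarith
  set V := vecMulVec a (star a) + ((δ : ℂ) ^ 2) • vecMulVec b (star b) with hVdef
  have hVpd : V.PosDef := by
    rw [hVdef, show ((δ:ℂ)^2) = (((δ^2 : ℝ)):ℂ) by push_cast; ring]
    exact posdefV ha hb hab (δ^2) (by positivity)
  obtain ⟨k1, k2, k3⟩ := key a b δ hδ ha hb hab V rfl hVpd
    (hVpd.posSemidef.sqrt.mulVec b) (hVpd.inv.posSemidef.sqrt.mulVec a) rfl rfl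
  have := hC V hVpd (hVpd.posSemidef.sqrt.mulVec b) (hVpd.inv.posSemidef.sqrt.mulVec a)
  rw [k1, k2, k3, mul_one] at this
  linarith
end

section
/- Let W be a matrix weight and (α_Q) nonnegative scalars with the Carleson condition (1/|K|) Σ_{Q ⊆ K} α_Q ≤ 1 for all dyadic K ⊆ Q₀. Then (1/|K|) Σ_{Q ⊆ K} α_Q ⟨W^{-1}⟩_Q^{-1} ≤ 4 ⟨W⟩_K in the Loewner order, for all dyadic K ⊆ Q₀. -/
open Matrix
open scoped ComplexOrder

/-- Average over the dyadic cube of generation `m`, index `j`, of a matrix-valued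
function which is constant on the `2^N` leaves of the dyadic tree of depth `N`. -/
noncomputable def dyadicAvg {d : ℕ} (N : ℕ) (w : ℕ → Matrix (Fin d) (Fin d) ℂ)
    (m j : ℕ) : Matrix (Fin d) (Fin d) ℂ :=
  (((2 : ℝ) ^ (N - m))⁻¹) • ∑ l ∈ Finset.range (2 ^ (N - m)), w (j * 2 ^ (N - m) + l)

section AuxMatrix
variable {d : ℕ}

lemma herm_rsmul {A : Matrix (Fin d) (Fin d) ℂ} (h : A.IsHermitian) (r : ℝ) :
    (r • A).IsHermitian := by
  unfold Matrix.IsHermitian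
  rw [Matrix.conjTranspose_smul, h.eq]
  simp

lemma rsmul_eq_csmul (r : ℝ) (A : Matrix (Fin d) (Fin d) ℂ) : r • A = (r : ℂ) • A := by
  ext i j
  simp [Matrix.smul_apply, Complex.real_smul]

lemma psd_rsmul {A : Matrix (Fin d) (Fin d) ℂ} (hA : A.PosSemidef) {r : ℝ} (hr : 0 ≤ r) :
    (r • A).PosSemidef := by
  rw [rsmul_eq_csmul]
  exact hA.smul (show (0:ℂ) ≤ (r:ℂ) by exact_mod_cast hr)

lemma posdef_rsmul {A : Matrix (Fin d) (Fin d) ℂ} (hA : A.PosDef) {r : ℝ} (hr : 0 < r) :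
    (r • A).PosDef := by
  rw [rsmul_eq_csmul]
  exact hA.smul (show (0:ℂ) < (r:ℂ) by exact_mod_cast hr)

lemma posdef_sum {s : Finset ℕ} (hs : s.Nonempty) (f : ℕ → Matrix (Fin d) (Fin d) ℂ)
    (hf : ∀ i ∈ s, (f i).PosDef) : (∑ i ∈ s, f i).PosDef := by
  induction hs using Finset.Nonempty.cons_induction with
  | singleton a => simpa using hf a (by simp)
  | cons a s h hs ih =>
      rw [Finset.sum_cons]
      exact (hf a (by simp)).add (ih (fun i hi => hf i (by simp [hi])))

lemma tangent {X T : Matrix (Fin d) (Fin d) ℂ} (hX : X.PosDef) (hT : T.IsHermitian) :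
    (T * X * T - T - T + X⁻¹).PosSemidef := by
  have hdet : IsUnit X.det := (Matrix.isUnit_iff_isUnit_det _).1 hX.isUnit
  have h1 : ((T * X - 1) * X⁻¹ * (T * X - 1)ᴴ).PosSemidef :=
    hX.inv.posSemidef.mul_mul_conjTranspose_same _
  have hXi : X * X⁻¹ = 1 := Matrix.mul_nonsing_inv _ hdet
  have hiX : X⁻¹ * X = 1 := Matrix.nonsing_inv_mul _ hdet
  have h2 : (T * X - 1)ᴴ = X * T - 1 := by
    rw [conjTranspose_sub, conjTranspose_mul, hX.1.eq, hT.eq, conjTranspose_one]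
  rw [h2] at h1
  have e1 : (T * X - 1) * X⁻¹ = T - X⁻¹ := by
    rw [Matrix.sub_mul, Matrix.mul_assoc, hXi, Matrix.mul_one, Matrix.one_mul]
  have h3 : (T * X - 1) * X⁻¹ * (X * T - 1) = T * X * T - T - T + X⁻¹ := by
    rw [e1, Matrix.sub_mul, Matrix.mul_sub, Matrix.mul_sub, Matrix.mul_one, Matrix.mul_one,
      ← Matrix.mul_assoc, ← Matrix.mul_assoc, hiX, Matrix.one_mul]
    abel
  rw [h3] at h1
  exact h1

lemma conv {X Y : Matrix (Fin d) (Fin d) ℂ} (hX : X.PosDef) (hY : Y.PosDef)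
    {a b : ℝ} (ha : 0 < a) (hb : 0 < b) :
    ((a^2) • X⁻¹ + (b^2) • Y⁻¹ - ((a+b)^2) • (X+Y)⁻¹).PosSemidef := by
  set C := X + Y with hC
  have hCpd : C.PosDef := hX.add hY
  have hCdet : IsUnit C.det := (Matrix.isUnit_iff_isUnit_det _).1 hCpd.isUnit
  have hCi : C * C⁻¹ = 1 := Matrix.mul_nonsing_inv _ hCdet
  have hiC : C⁻¹ * C = 1 := Matrix.nonsing_inv_mul _ hCdet
  have hCih : (C⁻¹).IsHermitian := hCpd.inv.1
  set TX : Matrix (Fin d) (Fin d) ℂ := ((a+b)/a) • C⁻¹ with hTX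
  set TY : Matrix (Fin d) (Fin d) ℂ := ((a+b)/b) • C⁻¹ with hTY
  have h1 : ((a^2) • (TX * X * TX - TX - TX + X⁻¹)).PosSemidef :=
    psd_rsmul (tangent hX (herm_rsmul hCih _)) (by positivity)
  have h2 : ((b^2) • (TY * Y * TY - TY - TY + Y⁻¹)).PosSemidef :=
    psd_rsmul (tangent hY (herm_rsmul hCih _)) (by positivity)
  have key : (a^2) • X⁻¹ + (b^2) • Y⁻¹ - ((a+b)^2) • C⁻¹
      = (a^2) • (TX * X * TX - TX - TX + X⁻¹) + (b^2) • (TY * Y * TY - TY - TY + Y⁻¹) := by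
    have hU : C⁻¹ * X * C⁻¹ + C⁻¹ * Y * C⁻¹ = C⁻¹ := by
      rw [← Matrix.add_mul, ← Matrix.mul_add, ← hC, hiC, Matrix.one_mul]
    have hane : a ≠ 0 := ha.ne'
    have hbne : b ≠ 0 := hb.ne'
    have eX : TX * X * TX = (((a+b)/a) * ((a+b)/a)) • (C⁻¹ * X * C⁻¹) := by
      rw [hTX, Matrix.smul_mul, Matrix.smul_mul, Matrix.mul_smul, smul_smul]
    have eY : TY * Y * TY = (((a+b)/b) * ((a+b)/b)) • (C⁻¹ * Y * C⁻¹) := by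
      rw [hTY, Matrix.smul_mul, Matrix.smul_mul, Matrix.mul_smul, smul_smul]
    have exp1 : (a^2:ℝ) • (TX * X * TX - TX - TX + X⁻¹)
        = ((a+b)^2) • (C⁻¹ * X * C⁻¹) - (2*(a*(a+b))) • C⁻¹ + (a^2) • X⁻¹ := by
      rw [eX, hTX]
      match_scalars <;> field_simp <;> ring
    have exp2 : (b^2:ℝ) • (TY * Y * TY - TY - TY + Y⁻¹)
        = ((a+b)^2) • (C⁻¹ * Y * C⁻¹) - (2*(b*(a+b))) • C⁻¹ + (b^2) • Y⁻¹ := by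
      rw [eY, hTY]
      match_scalars <;> field_simp <;> ring
    rw [exp1, exp2]
    linear_combination (norm := module) (-((a+b)^2 : ℝ)) • hU
  rw [key]
  exact h1.add h2

end AuxMatrix

lemma split_sum {M : Type*} [AddCommMonoid M] (f : ℕ → M) (e k : ℕ) :
    ∑ l ∈ Finset.range (2^(e+1)), f (k * 2^(e+1) + l)
      = (∑ l ∈ Finset.range (2^e), f ((2*k) * 2^e + l))
        + ∑ l ∈ Finset.range (2^e), f ((2*k+1) * 2^e + l) := by
  have h2 : (2:ℕ)^(e+1) = 2^e + 2^e := by ring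
  rw [h2, Finset.sum_range_add]
  congr 1
  · exact Finset.sum_congr rfl (fun l _ => by congr 1; ring)
  · exact Finset.sum_congr rfl (fun l _ => by congr 1; ring)

lemma carleson_split {M : Type*} [AddCommMonoid M] (g : ℕ → ℕ → M) (N n k : ℕ) (hn : n < N) :
    ∑ m ∈ Finset.Icc n N, ∑ l ∈ Finset.range (2^(m-n)), g m (k * 2^(m-n) + l)
      = g n k
        + ((∑ m ∈ Finset.Icc (n+1) N, ∑ l ∈ Finset.range (2^(m-(n+1))), g m ((2*k) * 2^(m-(n+1)) + l))
        + ∑ m ∈ Finset.Icc (n+1) N, ∑ l ∈ Finset.range (2^(m-(n+1))), g m ((2*k+1) * 2^(m-(n+1)) + l)) := by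
  have h1 : Finset.Icc n N = Finset.Ico n (N+1) := by rw [Finset.Ico_add_one_right_eq_Icc]
  have h2 : Finset.Icc (n+1) N = Finset.Ico (n+1) (N+1) := by rw [Finset.Ico_add_one_right_eq_Icc]
  rw [h1, h2, Finset.sum_eq_sum_Ico_succ_bot (by omega)]
  congr 1
  · simp
  · rw [← Finset.sum_add_distrib]
    refine Finset.sum_congr rfl (fun m hm => ?_)
    have hm' : n + 1 ≤ m := (Finset.mem_Ico.1 hm).1
    have he : m - n = (m-(n+1))+1 := by omega
    rw [he]
    exact split_sum (g m) _ k

section AuxDyadic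
variable {d : ℕ}

lemma avg_leaf (N : ℕ) (w : ℕ → Matrix (Fin d) (Fin d) ℂ) (k : ℕ) :
    dyadicAvg N w N k = w k := by
  simp [dyadicAvg]

lemma avg_split (N : ℕ) (w : ℕ → Matrix (Fin d) (Fin d) ℂ) {n : ℕ} (k : ℕ) (hn : n < N) :
    dyadicAvg N w n k
      = (2:ℝ)⁻¹ • (dyadicAvg N w (n+1) (2*k) + dyadicAvg N w (n+1) (2*k+1)) := by
  have he : N - n = (N - (n+1)) + 1 := by omega
  set e := N - (n+1) with hee
  unfold dyadicAvg
  rw [he, split_sum, ← hee, smul_add, smul_add, smul_smul, smul_smul]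
  have h : ((2:ℝ) ^ (e+1))⁻¹ = 2⁻¹ * ((2:ℝ)^e)⁻¹ := by rw [pow_succ]; ring
  rw [h]

lemma avg_posdef (N : ℕ) (v : ℕ → Matrix (Fin d) (Fin d) ℂ)
    (hv : ∀ j < 2^N, (v j).PosDef) {n k : ℕ} (hn : n ≤ N) (hk : k < 2^n) :
    (dyadicAvg N v n k).PosDef := by
  unfold dyadicAvg
  refine posdef_rsmul (posdef_sum ?_ _ (fun l hl => hv _ ?_)) (by positivity)
  · exact Finset.nonempty_range_iff.2 (by positivity)
  · have hl' : l < 2^(N-n) := Finset.mem_range.1 hl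
    calc k * 2^(N-n) + l < (k+1) * 2^(N-n) := by nlinarith
    _ ≤ 2^n * 2^(N-n) := Nat.mul_le_mul_right _ hk
    _ = 2^N := by rw [← pow_add]; congr 1; omega

end AuxDyadic

set_option maxHeartbeats 1000000 in
lemma scalar_key {m0 m1 β u v : ℝ} (hm0 : 0 ≤ m0) (hm0' : m0 ≤ 1) (hm1 : 0 ≤ m1) (hm1' : m1 ≤ 1)
    (hβ : 0 ≤ β) (hK : β + (m0+m1)/2 ≤ 1) (hu : 0 < u) (hv : 0 < v)
    (hu2 : u^2 = 2/(1+m0)) (hv2 : v^2 = 2/(1+m1)) :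
    8/(1 + (β + (m0+m1)/2)) + 2*β ≤ (u+v)^2 := by
  have hp0 : (0:ℝ) < 1 + m0 := by linarith
  have hp1 : (0:ℝ) < 1 + m1 := by linarith
  set p := (1+m0)/2 with hp
  set q := (1+m1)/2 with hq
  have hpu : u^2 * p = 1 := by rw [hu2, hp]; field_simp
  have hqv : v^2 * q = 1 := by rw [hv2, hq]; field_simp
  have hppos : 0 < p := by positivity
  have hqpos : 0 < q := by positivity
  have hple : p ≤ 1 := by rw [hp]; linarith
  have hqle : q ≤ 1 := by rw [hq]; linarith
  have hu1 : 1 ≤ u := by nlinarith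
  have hv1 : 1 ≤ v := by nlinarith
  have hs : 1 + (β + (m0+m1)/2) = β + p + q := by rw [hp, hq]; ring
  have hspos : (0:ℝ) < β + p + q := by positivity
  rw [hs, div_add' _ _ _ hspos.ne', div_le_iff₀ hspos]
  have h8' : 8*(u^2*v^2) ≤ (u+v)^2*(u^2+v^2) := by
    nlinarith [sq_nonneg (u-v), mul_pos hu hv,
      mul_nonneg (mul_nonneg hu.le hv.le) (sq_nonneg (u-v)), sq_nonneg ((u-v)^2)]
  have e : (u+v)^2*(p+q)*(u^2*v^2) = (u+v)^2*(u^2+v^2) := by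
    linear_combination ((u+v)^2*v^2)*hpu + ((u+v)^2*u^2)*hqv
  have huv2 : (0:ℝ) < u^2*v^2 := by positivity
  have h8 : 8 ≤ (u+v)^2*(p+q) := by
    rw [← mul_le_mul_iff_of_pos_right huv2]
    calc 8*(u^2*v^2) ≤ (u+v)^2*(u^2+v^2) := h8'
    _ = (u+v)^2*(p+q)*(u^2*v^2) := e.symm
  have h4 : 4 ≤ (u+v)^2 := by nlinarith
  have hs2 : β + p + q ≤ 2 := by rw [← hs]; linarith
  nlinarith [mul_nonneg hβ (by linarith : (0:ℝ) ≤ (u+v)^2 - 4),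
    mul_nonneg hβ (by linarith : (0:ℝ) ≤ 2 - (β+p+q))]

/-- The Carleson sum of the scalars over the subtree of `(n,k)`. -/
def Ssum (α : ℕ → ℕ → ℝ) (N n k : ℕ) : ℝ :=
  ∑ m ∈ Finset.Icc n N, ∑ l ∈ Finset.range (2 ^ (m - n)), α m (k * 2 ^ (m - n) + l)

/-- The matrix sum over the subtree of `(n,k)`. -/
noncomputable def Tsum {d : ℕ} (N : ℕ) (w : ℕ → Matrix (Fin d) (Fin d) ℂ)
    (α : ℕ → ℕ → ℝ) (n k : ℕ) : Matrix (Fin d) (Fin d) ℂ :=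
  ∑ m ∈ Finset.Icc n N, ∑ l ∈ Finset.range (2 ^ (m - n)),
    α m (k * 2 ^ (m - n) + l) • (dyadicAvg N (fun j => (w j)⁻¹) m (k * 2 ^ (m - n) + l))⁻¹

lemma Ssum_nonneg (α : ℕ → ℕ → ℝ) (hα : ∀ m j, 0 ≤ α m j) (N n k : ℕ) :
    0 ≤ Ssum α N n k :=
  Finset.sum_nonneg fun _ _ => Finset.sum_nonneg fun _ _ => hα _ _

set_option maxHeartbeats 2000000 in
lemma bellman {d : ℕ} (N : ℕ) (w : ℕ → Matrix (Fin d) (Fin d) ℂ)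
    (hw : ∀ j < 2 ^ N, (w j).PosDef)
    (α : ℕ → ℕ → ℝ) (hα : ∀ m j, 0 ≤ α m j)
    (hCarl : ∀ n ≤ N, ∀ k < 2 ^ n, (2 : ℝ) ^ n * Ssum α N n k ≤ 1) :
    ∀ i n k, n + i = N → k < 2 ^ n →
      ((4 : ℝ) • dyadicAvg N w n k
        - (4 * (1 + (2:ℝ)^n * Ssum α N n k)⁻¹) • (dyadicAvg N (fun j => (w j)⁻¹) n k)⁻¹
        - (2 : ℝ) ^ n • Tsum N w α n k).PosSemidef := by
  intro i
  induction i with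
  | zero =>
      intro n k hnN hk
      have hn : n = N := by omega
      subst hn
      have hwk := hw k hk
      have hdet : IsUnit (w k).det := (Matrix.isUnit_iff_isUnit_det _).1 hwk.isUnit
      have hA : dyadicAvg n w n k = w k := avg_leaf n w k
      have hB : dyadicAvg n (fun j => (w j)⁻¹) n k = (w k)⁻¹ := avg_leaf n _ k
      have hS : Ssum α n n k = α n k := by
        simp [Ssum, Finset.Icc_self]
      have hT : Tsum n w α n k = α n k • (w k) := by
        unfold Tsum
        simp only [Finset.Icc_self, Finset.sum_singleton, Nat.sub_self, pow_zero,
          Finset.range_one, Finset.sum_singleton, mul_one, add_zero]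
        rw [hB, Matrix.nonsing_inv_nonsing_inv _ hdet]
      rw [hA, hB, hS, hT, Matrix.nonsing_inv_nonsing_inv _ hdet]
      have hm0 : 0 ≤ (2:ℝ)^n * α n k := mul_nonneg (by positivity) (hα _ _)
      have hm1 : (2:ℝ)^n * α n k ≤ 1 := by
        have := hCarl n le_rfl k hk
        rwa [hS] at this
      have h1m : (0:ℝ) < 1 + (2:ℝ)^n * α n k := by linarith
      have key : (4:ℝ) • w k - (4 * (1 + (2:ℝ)^n * α n k)⁻¹) • w k
            - (2:ℝ)^n • (α n k • w k)
          = (4 - 4 * (1 + (2:ℝ)^n * α n k)⁻¹ - (2:ℝ)^n * α n k) • w k := by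
        module
      rw [key]
      refine psd_rsmul hwk.posSemidef ?_
      have h2 : 4 * (1 + (2:ℝ)^n * α n k)⁻¹ ≤ 4 - (2:ℝ)^n * α n k := by
        rw [mul_inv_le_iff₀ h1m]
        nlinarith
      linarith
  | succ i ih =>
      intro n k hnN hk
      have hn : n < N := by omega
      have hk0 : 2*k < 2^(n+1) := by rw [pow_succ]; omega
      have hk1 : 2*k+1 < 2^(n+1) := by rw [pow_succ]; omega
      have E0 := ih (n+1) (2*k) (by omega) hk0
      have E1 := ih (n+1) (2*k+1) (by omega) hk1
      have hwipd : ∀ j < 2^N, ((w j)⁻¹).PosDef := fun j hj => (hw j hj).inv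
      have B0pd : (dyadicAvg N (fun j => (w j)⁻¹) (n+1) (2*k)).PosDef :=
        avg_posdef N _ hwipd (by omega) hk0
      have B1pd : (dyadicAvg N (fun j => (w j)⁻¹) (n+1) (2*k+1)).PosDef :=
        avg_posdef N _ hwipd (by omega) hk1
      have hCpd : (dyadicAvg N (fun j => (w j)⁻¹) (n+1) (2*k)
          + dyadicAvg N (fun j => (w j)⁻¹) (n+1) (2*k+1)).PosDef := B0pd.add B1pd
      have hCdet : IsUnit (dyadicAvg N (fun j => (w j)⁻¹) (n+1) (2*k)
          + dyadicAvg N (fun j => (w j)⁻¹) (n+1) (2*k+1)).det :=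
        (Matrix.isUnit_iff_isUnit_det _).1 hCpd.isUnit
      have hA := avg_split N w k hn
      have hB := avg_split N (fun j => (w j)⁻¹) k hn
      have hBinv : (dyadicAvg N (fun j => (w j)⁻¹) n k)⁻¹
          = (2:ℝ) • (dyadicAvg N (fun j => (w j)⁻¹) (n+1) (2*k)
              + dyadicAvg N (fun j => (w j)⁻¹) (n+1) (2*k+1))⁻¹ := by
        refine Matrix.inv_eq_right_inv ?_
        rw [hB, Matrix.smul_mul, Matrix.mul_smul, smul_smul, Matrix.mul_nonsing_inv _ hCdet]
        norm_num
      have hSrec : Ssum α N n k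
          = α n k + (Ssum α N (n+1) (2*k) + Ssum α N (n+1) (2*k+1)) := by
        unfold Ssum
        exact carleson_split α N n k hn
      have hTrec : Tsum N w α n k
          = α n k • (dyadicAvg N (fun j => (w j)⁻¹) n k)⁻¹
            + (Tsum N w α (n+1) (2*k) + Tsum N w α (n+1) (2*k+1)) := by
        unfold Tsum
        exact carleson_split
          (fun m j => α m j • (dyadicAvg N (fun j' => (w j')⁻¹) m j)⁻¹) N n k hn
      -- scalar bookkeeping
      have hS0 : 0 ≤ Ssum α N (n+1) (2*k) := Ssum_nonneg α hα N (n+1) (2*k)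
      have hS1 : 0 ≤ Ssum α N (n+1) (2*k+1) := Ssum_nonneg α hα N (n+1) (2*k+1)
      have hm0 : 0 ≤ (2:ℝ)^(n+1) * Ssum α N (n+1) (2*k) := mul_nonneg (by positivity) hS0
      have hm1 : 0 ≤ (2:ℝ)^(n+1) * Ssum α N (n+1) (2*k+1) := mul_nonneg (by positivity) hS1
      have hm0' : (2:ℝ)^(n+1) * Ssum α N (n+1) (2*k) ≤ 1 := hCarl (n+1) (by omega) (2*k) hk0
      have hm1' : (2:ℝ)^(n+1) * Ssum α N (n+1) (2*k+1) ≤ 1 := hCarl (n+1) (by omega) (2*k+1) hk1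
      have hβ : 0 ≤ (2:ℝ)^n * α n k := mul_nonneg (by positivity) (hα _ _)
      have hmix : (2:ℝ)^n * Ssum α N n k
          = (2:ℝ)^n * α n k + ((2:ℝ)^(n+1) * Ssum α N (n+1) (2*k)
              + (2:ℝ)^(n+1) * Ssum α N (n+1) (2*k+1)) / 2 := by
        rw [hSrec]; ring
      have hKle : (2:ℝ)^n * α n k + ((2:ℝ)^(n+1) * Ssum α N (n+1) (2*k)
            + (2:ℝ)^(n+1) * Ssum α N (n+1) (2*k+1)) / 2 ≤ 1 := by
        rw [← hmix]; exact hCarl n (by omega) k hk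
      have hd0 : (0:ℝ) < 1 + (2:ℝ)^(n+1) * Ssum α N (n+1) (2*k) := by linarith
      have hd1 : (0:ℝ) < 1 + (2:ℝ)^(n+1) * Ssum α N (n+1) (2*k+1) := by linarith
      set a : ℝ := Real.sqrt (2 / (1 + (2:ℝ)^(n+1) * Ssum α N (n+1) (2*k))) with hadef
      set b : ℝ := Real.sqrt (2 / (1 + (2:ℝ)^(n+1) * Ssum α N (n+1) (2*k+1))) with hbdef
      have ha : 0 < a := Real.sqrt_pos.2 (by positivity)
      have hb : 0 < b := Real.sqrt_pos.2 (by positivity)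
      have ha2 : a^2 = 2 / (1 + (2:ℝ)^(n+1) * Ssum α N (n+1) (2*k)) :=
        Real.sq_sqrt (by positivity)
      have hb2 : b^2 = 2 / (1 + (2:ℝ)^(n+1) * Ssum α N (n+1) (2*k+1)) :=
        Real.sq_sqrt (by positivity)
      have hconv := conv B0pd B1pd ha hb
      rw [ha2, hb2] at hconv
      have hkey := scalar_key hm0 hm0' hm1 hm1' hβ hKle ha hb ha2 hb2
      have hden : 1 + ((2:ℝ)^n * α n k + ((2:ℝ)^(n+1) * Ssum α N (n+1) (2*k)
            + (2:ℝ)^(n+1) * Ssum α N (n+1) (2*k+1)) / 2)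
          = 1 + (2:ℝ)^n * Ssum α N n k := by rw [hmix]
      rw [hden] at hkey
      have hQ2 : (((a+b)^2 - (8 / (1 + (2:ℝ)^n * Ssum α N n k) + 2 * ((2:ℝ)^n * α n k)))
          • (dyadicAvg N (fun j => (w j)⁻¹) (n+1) (2*k)
              + dyadicAvg N (fun j => (w j)⁻¹) (n+1) (2*k+1))⁻¹).PosSemidef :=
        psd_rsmul hCpd.inv.posSemidef (by linarith)
      have final := (((psd_rsmul E0 (by norm_num : (0:ℝ) ≤ 2⁻¹)).add
          (psd_rsmul E1 (by norm_num : (0:ℝ) ≤ 2⁻¹))).add hconv).add hQ2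
      convert final using 1
      have hSn : 0 ≤ Ssum α N n k := Ssum_nonneg α hα N n k
      have hneK : (1:ℝ) + (2:ℝ)^n * Ssum α N n k ≠ 0 := by
        have : (0:ℝ) ≤ (2:ℝ)^n * Ssum α N n k := mul_nonneg (by positivity) hSn
        linarith
      have hne0 : (1:ℝ) + (2:ℝ)^(n+1) * Ssum α N (n+1) (2*k) ≠ 0 := hd0.ne'
      have hne1 : (1:ℝ) + (2:ℝ)^(n+1) * Ssum α N (n+1) (2*k+1) ≠ 0 := hd1.ne'
      rw [hA, hTrec, hBinv]
      match_scalars <;> field_simp <;> ring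

/-- finite dyadic-martingale version: if the nonnegative scalars `α_Q`
satisfy the Carleson condition `(1/|K|) Σ_{Q ⊆ K} α_Q ≤ 1`, then
`(1/|K|) Σ_{Q ⊆ K} α_Q ⟨W⁻¹⟩_Q⁻¹ ≤ 4 ⟨W⟩_K` in the Loewner order. -/
theorem scalar_sequence_redundancy
    {d : ℕ} (N : ℕ) (w : ℕ → Matrix (Fin d) (Fin d) ℂ)
    (hw : ∀ j < 2 ^ N, (w j).PosDef)
    (α : ℕ → ℕ → ℝ) (hα : ∀ m j, 0 ≤ α m j)
    (hCarl : ∀ n ≤ N, ∀ k < 2 ^ n,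
      (2 : ℝ) ^ n * ∑ m ∈ Finset.Icc n N, ∑ l ∈ Finset.range (2 ^ (m - n)),
        α m (k * 2 ^ (m - n) + l) ≤ 1) :
    ∀ n ≤ N, ∀ k < 2 ^ n,
      ((4 : ℝ) • dyadicAvg N w n k -
        (2 : ℝ) ^ n • ∑ m ∈ Finset.Icc n N, ∑ l ∈ Finset.range (2 ^ (m - n)),
          α m (k * 2 ^ (m - n) + l) •
            (dyadicAvg N (fun j => (w j)⁻¹) m (k * 2 ^ (m - n) + l))⁻¹).PosSemidef := by
  intro n hn k hk
  have hmain := bellman N w hw α hα (fun n hn k hk => hCarl n hn k hk) (N - n) n k (by omega) hk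
  have hBpd : (dyadicAvg N (fun j => (w j)⁻¹) n k).PosDef :=
    avg_posdef N _ (fun j hj => (hw j hj).inv) hn hk
  have hSn : 0 ≤ (2:ℝ)^n * Ssum α N n k :=
    mul_nonneg (by positivity) (Ssum_nonneg α hα N n k)
  have hc : 0 ≤ 4 * (1 + (2:ℝ)^n * Ssum α N n k)⁻¹ := by
    have h1 : (0:ℝ) < 1 + (2:ℝ)^n * Ssum α N n k := by linarith
    positivity
  have final := hmain.add (psd_rsmul hBpd.inv.posSemidef hc)
  convert final using 1
  have hTdef : (∑ m ∈ Finset.Icc n N, ∑ l ∈ Finset.range (2 ^ (m - n)),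
      α m (k * 2 ^ (m - n) + l) •
        (dyadicAvg N (fun j => (w j)⁻¹) m (k * 2 ^ (m - n) + l))⁻¹) = Tsum N w α n k := rfl
  rw [hTdef]
  module
end
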